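/- arXiv:2111.08245 — 2 statements merged into one kernel-verified Lean document; each statement's English description precedes it below -/
import Mathlib

section
/- Let A be a real symmetric n × n matrix. Then there exists a unitary matrix h ∈ U(n) (viewed as a complex n × n matrix with real part Re h and imaginary part Im h) such that Re h is invertible and A = (Im h)(Re h)^{-1}. In fact h = (I + iA)(I + A^2)^{-1/2} works, where (I + A^2)^{-1/2} is the inverse of the positive definite square root of I + A^2. -/
open Matrix

theorem stmt1 (n : ℕ) (A : Matrix (Fin n) (Fin n) ℝ) (hA : A.IsSymm) :
    ∃ h : Matrix (Fin n) (Fin n) ℂ,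
      h ∈ Matrix.unitaryGroup (Fin n) ℂ ∧
      IsUnit (h.map Complex.re) ∧
      A = (h.map Complex.im) * (h.map Complex.re)⁻¹ := by
  have hAH : Aᴴ = A := by
    rw [conjTranspose_eq_transpose_of_trivial, hA.eq]
  -- P = 1 + A² is positive definite
  have hP : (1 + A * A).PosDef := by
    refine Matrix.PosDef.add_posSemidef Matrix.PosDef.one ?_
    have := Matrix.posSemidef_conjTranspose_mul_self A
    rwa [hAH] at this
  open scoped MatrixOrder in set S := CFC.sqrt (1 + A * A) with hSdef
  have hSsym : Sᵀ = S := by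
    open scoped MatrixOrder in have := (CFC.sqrt_nonneg (1 + A * A)).posSemidef.isHermitian
    rwa [IsHermitian, conjTranspose_eq_transpose_of_trivial] at this
  have hSS : S * S = 1 + A * A := by
    open scoped MatrixOrder in exact CFC.sqrt_mul_sqrt_self _ hP.posSemidef.nonneg
  have hdet : IsUnit S.det := by
    refine Ne.isUnit fun h0 => hP.det_pos.ne' ?_
    rw [← hSS, det_mul, h0, mul_zero]
  set B := S⁻¹ with hBdef
  have hBS : B * S = 1 := nonsing_inv_mul S hdet
  have hSB : S * B = 1 := mul_nonsing_inv S hdet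
  have hBsym : Bᵀ = B := by rw [hBdef, transpose_nonsing_inv, hSsym]
  have key : B * B + B * (A * A) * B = 1 := by
    have h1 : B * (S * S) * B = 1 := by
      rw [← mul_assoc, mul_assoc (B * S), hBS, hSB, one_mul]
    rwa [hSS, mul_add, mul_one, add_mul] at h1
  set φ : Matrix (Fin n) (Fin n) ℝ →+* Matrix (Fin n) (Fin n) ℂ :=
    (Complex.ofRealHom).mapMatrix with hφdef
  have hre : ∀ M N : Matrix (Fin n) (Fin n) ℝ,
      (φ M + Complex.I • φ N).map Complex.re = M := by
    intro M N; ext i j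
    simp [hφdef, RingHom.mapMatrix_apply, Matrix.map_apply]
  have him : ∀ M N : Matrix (Fin n) (Fin n) ℝ,
      (φ M + Complex.I • φ N).map Complex.im = N := by
    intro M N; ext i j
    simp [hφdef, RingHom.mapMatrix_apply, Matrix.map_apply]
  refine ⟨φ B + Complex.I • φ (A * B), ?_, ?_, ?_⟩
  · rw [Matrix.mem_unitaryGroup_iff']
    have hconj : ∀ M : Matrix (Fin n) (Fin n) ℝ, (φ M)ᴴ = φ Mᵀ := by
      intro M
      ext i j
      simp [hφdef, RingHom.mapMatrix_apply, conjTranspose_apply]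
    have hstar : star (φ B + Complex.I • φ (A * B)) = φ B - Complex.I • φ (B * A) := by
      have hABt : (A * B)ᵀ = B * A := by rw [transpose_mul, hBsym, hA.eq]
      rw [star_eq_conjTranspose, conjTranspose_add, conjTranspose_smul, hconj, hconj,
        hABt, hBsym]
      simp [sub_eq_add_neg]
    rw [hstar]
    have e1 : B * (A * B) = B * A * B := (mul_assoc _ _ _).symm
    have e2 : B * A * (A * B) = B * (A * A) * B := by
      rw [mul_assoc, ← mul_assoc A A B, ← mul_assoc]
    have expand : (φ B - Complex.I • φ (B * A)) * (φ B + Complex.I • φ (A * B)) =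
        φ (B * B) + φ (B * (A * A) * B) := by
      have hI : (Complex.I • φ (B * A)) * (Complex.I • φ (A * B)) =
          -(φ (B * A) * φ (A * B)) := by
        rw [smul_mul_smul_comm, Complex.I_mul_I, neg_one_smul]
      rw [sub_mul, mul_add, mul_add, mul_smul_comm, smul_mul_assoc, hI,
        ← _root_.map_mul, ← _root_.map_mul, ← _root_.map_mul, ← _root_.map_mul, e1, e2]
      abel
    rw [expand, ← map_add φ _ _, key, _root_.map_one]
  · rw [hre]
    exact isUnit_nonsing_inv_iff.mpr ((isUnit_iff_isUnit_det S).mpr hdet)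
  · rw [hre, him, hBdef, nonsing_inv_nonsing_inv S hdet, mul_assoc, hBS, mul_one]
end

section
/- Let g ∈ GL(4,R) be the matrix with rows (1,0,0,0), (0,1,0,0), (√3, √5, 1, √2), (0,0,0,1), let Λ(g) ⊂ R^4 be the lattice generated by its rows, and let a_t = diag(e^{-t}, e^{t}, e^{-t}, e^{t}). Then: (1) for every t, the lattice Λ(g)·a_t (images of lattice vectors under right multiplication by a_t) contains the nonzero vector (e^{-t}, 0, 0, 0) of norm e^{-t}, so the minimal norm of a nonzero vector of Λ(g)·a_t tends to 0 as t → ∞; and (2) the vector (0,0,1,0) lies in the real span of Λ(g) and is not contained in the real span of any sublattice of Λ(g) of rank at most 3. -/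
/-- The geodesic flow `a_t = diag(e^{-t}, e^{t}, e^{-t}, e^{t})` on `ℝ⁴` with
coordinates `(x₁, y₁, x₂, y₂)`. -/
noncomputable def geodFlow4 (t : ℝ) (w : EuclideanSpace ℝ (Fin 4)) :
    EuclideanSpace ℝ (Fin 4) :=
  WithLp.toLp 2 (fun i => (if i.val % 2 = 0 then Real.exp (-t) else Real.exp t) * w i)

/-- The lattice `Λ(g)` generated by the rows `(1,0,0,0), (0,1,0,0),
`(√3, √5, 1, √2), (0,0,0,1)`. -/
noncomputable def LatticeG : Submodule ℤ (EuclideanSpace ℝ (Fin 4)) :=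
  Submodule.span ℤ ({WithLp.toLp 2 ![1, 0, 0, 0], WithLp.toLp 2 ![0, 1, 0, 0],
    WithLp.toLp 2 ![Real.sqrt 3, Real.sqrt 5, 1, Real.sqrt 2], WithLp.toLp 2 ![0, 0, 0, 1]} :
    Set (EuclideanSpace ℝ (Fin 4)))

open Real

unseal Nat.sqrt.iter in
lemma aux_notsq : ¬ IsSquare (6:ℕ) ∧ ¬ IsSquare (10:ℕ) ∧ ¬ IsSquare (15:ℕ) ∧ ¬ IsSquare (30:ℕ) :=
  ⟨by decide, by decide, by decide, by decide⟩

lemma aux_irrN {n : ℕ} (h : ¬ IsSquare n) : Irrational (√(n:ℝ)) := by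
  rw [show ((n:ℝ)) = ((n:ℕ):ℝ) by norm_num]; exact irrational_sqrt_natCast_iff.mpr h

lemma aux_coef_zero {x : ℝ} (hx : Irrational x) {a b : ℚ} (h : (a:ℝ) * x = b) : a = 0 := by
  by_contra ha
  exact (hx.ratCast_mul ha) ⟨b, h.symm⟩

/-- `1, √2, √3, √5` are linearly independent over `ℚ`. -/
lemma aux_sqrt_indep {p q s u : ℚ} (h : (s:ℝ) = p * √3 + q * √5 + u * √2) :
    p = 0 ∧ q = 0 ∧ s = 0 ∧ u = 0 := by
  set r2 := √2 with hr2
  set r3 := √3 with hr3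
  set r5 := √5 with hr5
  have h2 : r2^2 = 2 := Real.sq_sqrt (by norm_num)
  have h3 : r3^2 = 3 := Real.sq_sqrt (by norm_num)
  have h5 : r5^2 = 5 := Real.sq_sqrt (by norm_num)
  have i2 : Irrational r2 := irrational_sqrt_two
  have i3 : Irrational r3 := by
    rw [hr3, show ((3:ℝ)) = ((3:ℕ):ℝ) by norm_num]; exact Nat.prime_three.irrational_sqrt
  have i5 : Irrational r5 := by
    rw [hr5, show ((5:ℝ)) = ((5:ℕ):ℝ) by norm_num]
    exact (by norm_num : Nat.Prime 5).irrational_sqrt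
  have e6 : √6 = r2 * r3 := by rw [show (6:ℝ) = 2 * 3 by norm_num, Real.sqrt_mul (by norm_num)]
  have e10 : √10 = r2 * r5 := by rw [show (10:ℝ) = 2 * 5 by norm_num, Real.sqrt_mul (by norm_num)]
  have e15 : √15 = r3 * r5 := by rw [show (15:ℝ) = 3 * 5 by norm_num, Real.sqrt_mul (by norm_num)]
  have e30 : √30 = r2 * (r3 * r5) := by
    rw [show (30:ℝ) = 2 * 15 by norm_num, Real.sqrt_mul (by norm_num), e15]
  have i6 : Irrational (r2 * r3) := by rw [← e6]; exact_mod_cast aux_irrN aux_notsq.1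
  have i10 : Irrational (r2 * r5) := by rw [← e10]; exact_mod_cast aux_irrN aux_notsq.2.1
  have i15 : Irrational (r3 * r5) := by rw [← e15]; exact_mod_cast aux_irrN aux_notsq.2.2.1
  have i30 : Irrational (r2 * (r3 * r5)) := by rw [← e30]; exact_mod_cast aux_irrN aux_notsq.2.2.2
  have hA : (s:ℝ) - u * r2 = p * r3 + q * r5 := by linear_combination h
  have hstar : ((2*(p*q):ℚ):ℝ)*(r3*r5) + ((2*(s*u):ℚ):ℝ)*r2 = ((s^2+2*u^2-3*p^2-5*q^2 : ℚ):ℝ) := by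
    push_cast
    linear_combination (-((s:ℝ) - u*r2 + p*r3 + q*r5)) * hA + (u:ℝ)^2*h2 - (p:ℝ)^2*h3 - (q:ℝ)^2*h5
  have hB : ((8*(p*q*(s*u)):ℚ):ℝ) * (r2*(r3*r5)) =
      (((s^2+2*u^2-3*p^2-5*q^2)^2 - 60*(p*q)^2 - 8*(s*u)^2 : ℚ):ℝ) := by
    push_cast at hstar ⊢
    linear_combination (2*(p*q:ℝ)*(r3*r5) + 2*((s*u:ℝ))*r2 + ((s:ℝ)^2+2*u^2-3*p^2-5*q^2)) * hstar
      - 4*(p*q:ℝ)^2*(r3^2*h5 + 5*h3) - 4*((s*u:ℝ))^2*h2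
  have h8 := aux_coef_zero i30 hB
  have hpqsu : p * q = 0 ∨ s * u = 0 := by
    rcases mul_eq_zero.mp (show (p*q)*(s*u) = 0 by linarith) with h' | h'
    · exact Or.inl h'
    · exact Or.inr h'
  have hpq : p * q = 0 ∧ s * u = 0 := by
    rcases hpqsu with h' | h'
    · refine ⟨h', ?_⟩
      have hx : ((2*(s*u):ℚ):ℝ) * r2 = ((s^2+2*u^2-3*p^2-5*q^2 : ℚ):ℝ) := by
        rw [← hstar, h']; push_cast; ring
      have := aux_coef_zero i2 hx; linarith
    · refine ⟨?_, h'⟩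
      have hx : ((2*(p*q):ℚ):ℝ) * (r3*r5) = ((s^2+2*u^2-3*p^2-5*q^2 : ℚ):ℝ) := by
        rw [← hstar, h']; push_cast; ring
      have := aux_coef_zero i15 hx; linarith
  rcases mul_eq_zero.mp hpq.1 with hp | hq
  · rcases mul_eq_zero.mp hpq.2 with hs | hu
    · subst hp; subst hs
      have hx : ((q:ℚ):ℝ) * (r2*r5) = ((-2*u : ℚ):ℝ) := by
        push_cast; push_cast at h; linear_combination (-r2) * h - (u:ℝ)*h2
      have hq : q = 0 := aux_coef_zero i10 hx
      subst hq
      have hu : u = 0 := by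
        have hx2 : ((u:ℚ):ℝ) * r2 = ((0:ℚ):ℝ) := by push_cast at h ⊢; linarith
        exact aux_coef_zero i2 hx2
      exact ⟨rfl, rfl, rfl, hu⟩
    · subst hp; subst hu
      have hx : ((q:ℚ):ℝ) * r5 = ((s : ℚ):ℝ) := by push_cast at h ⊢; linarith
      have hq : q = 0 := aux_coef_zero i5 hx
      subst hq
      have hs : s = 0 := by
        have : (s:ℝ) = 0 := by push_cast at h; linarith
        exact_mod_cast this
      exact ⟨rfl, rfl, hs, rfl⟩
  · rcases mul_eq_zero.mp hpq.2 with hs | hu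
    · subst hq; subst hs
      have hx : ((p:ℚ):ℝ) * (r2*r3) = ((-2*u : ℚ):ℝ) := by
        push_cast; push_cast at h; linear_combination (-r2) * h - (u:ℝ)*h2
      have hp : p = 0 := aux_coef_zero i6 hx
      subst hp
      have hu : u = 0 := by
        have hx2 : ((u:ℚ):ℝ) * r2 = ((0:ℚ):ℝ) := by push_cast at h ⊢; linarith
        exact aux_coef_zero i2 hx2
      exact ⟨rfl, rfl, rfl, hu⟩
    · subst hq; subst hu
      have hx : ((p:ℚ):ℝ) * r3 = ((s : ℚ):ℝ) := by push_cast at h ⊢; linarith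
      have hp : p = 0 := aux_coef_zero i3 hx
      subst hp
      have hs : s = 0 := by
        have : (s:ℝ) = 0 := by push_cast at h; linarith
        exact_mod_cast this
      exact ⟨rfl, rfl, hs, rfl⟩

lemma aux_g1_mem : (WithLp.toLp 2 ![1,0,0,0] : EuclideanSpace ℝ (Fin 4)) ∈ LatticeG :=
  Submodule.subset_span (Set.mem_insert _ _)

lemma aux_g1_ne : (WithLp.toLp 2 ![1,0,0,0] : EuclideanSpace ℝ (Fin 4)) ≠ 0 := by
  intro h
  have := congrArg (fun v : EuclideanSpace ℝ (Fin 4) => v 0) h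
  simp at this

lemma aux_flow_g1 (t : ℝ) : geodFlow4 t (WithLp.toLp 2 ![1,0,0,0]) = WithLp.toLp 2 ![Real.exp (-t), 0, 0, 0] := by
  ext i
  fin_cases i <;> simp [geodFlow4]

lemma aux_norm_flow_g1 (t : ℝ) : ‖geodFlow4 t (WithLp.toLp 2 ![1,0,0,0])‖ = Real.exp (-t) := by
  rw [aux_flow_g1, EuclideanSpace.norm_eq]
  rw [Fin.sum_univ_four]
  simp [Real.norm_eq_abs, abs_of_pos (Real.exp_pos _)]
  rw [Real.sqrt_sq (Real.exp_pos _).le]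

lemma aux_mem_coords {v : EuclideanSpace ℝ (Fin 4)} (hv : v ∈ LatticeG) :
    ∃ a b c d : ℤ, v 0 = a + c * √3 ∧ v 1 = b + c * √5 ∧ v 2 = c ∧ v 3 = d + c * √2 := by
  simp only [LatticeG, Submodule.mem_span_insert, Submodule.mem_span_singleton] at hv
  obtain ⟨a, w, ⟨b, w2, ⟨c, w3, ⟨d, rfl⟩, rfl⟩, rfl⟩, rfl⟩ := hv
  refine ⟨a, b, c, d, ?_, ?_, ?_, ?_⟩ <;>
    simp [PiLp.add_apply, PiLp.smul_apply] <;> ring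

lemma aux_part2b (v₁ v₂ v₃ : EuclideanSpace ℝ (Fin 4)) (h₁ : v₁ ∈ LatticeG)
    (h₂ : v₂ ∈ LatticeG) (h₃ : v₃ ∈ LatticeG) :
    (WithLp.toLp 2 ![0, 0, 1, 0] : EuclideanSpace ℝ (Fin 4)) ∉
      Submodule.span ℝ ({v₁, v₂, v₃} : Set (EuclideanSpace ℝ (Fin 4))) := by
  intro hmem
  obtain ⟨a₁, b₁, c₁, d₁, k10, k11, k12, k13⟩ := aux_mem_coords h₁
  obtain ⟨a₂, b₂, c₂, d₂, k20, k21, k22, k23⟩ := aux_mem_coords h₂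
  obtain ⟨a₃, b₃, c₃, d₃, k30, k31, k32, k33⟩ := aux_mem_coords h₃
  simp only [Submodule.mem_span_insert, Submodule.mem_span_singleton] at hmem
  obtain ⟨x, w, ⟨y, w2, ⟨z, rfl⟩, rfl⟩, ht⟩ := hmem
  have E0 := congrArg (fun v : EuclideanSpace ℝ (Fin 4) => v 0) ht
  have E1 := congrArg (fun v : EuclideanSpace ℝ (Fin 4) => v 1) ht
  have E2 := congrArg (fun v : EuclideanSpace ℝ (Fin 4) => v 2) ht
  have E3 := congrArg (fun v : EuclideanSpace ℝ (Fin 4) => v 3) ht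
  simp at E0 E1 E2 E3
  rw [k10, k20, k30] at E0
  rw [k11, k21, k31] at E1
  rw [k12, k22, k32] at E2
  rw [k13, k23, k33] at E3
  have hα : x * a₁ + y * a₂ + z * a₃ = -√3 := by linear_combination -E0 + √3 * E2
  have hβ : x * b₁ + y * b₂ + z * b₃ = -√5 := by linear_combination -E1 + √5 * E2
  have hγ : x * c₁ + y * c₂ + z * c₃ = 1 := by linear_combination -E2
  have hδ : x * d₁ + y * d₂ + z * d₃ = -√2 := by linear_combination -E3 + √2 * E2
  set M : Fin 4 → Fin 3 → ℚ := ![![a₁, a₂, a₃], ![b₁, b₂, b₃], ![c₁, c₂, c₃], ![d₁, d₂, d₃]]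
    with hM
  have hnli : ¬ LinearIndependent ℚ M := by
    intro hli
    have := hli.fintype_card_le_finrank
    rw [Module.finrank_fin_fun] at this
    simp at this
  obtain ⟨g, hsum, i, hgi⟩ := Fintype.not_linearIndependent_iff.mp hnli
  rw [Fin.sum_univ_four] at hsum
  have e1 := congrFun hsum 0
  have e2 := congrFun hsum 1
  have e3 := congrFun hsum 2
  simp [hM] at e1 e2 e3
  have e1R := congrArg (fun r : ℚ => (r : ℝ)) e1
  have e2R := congrArg (fun r : ℚ => (r : ℝ)) e2
  have e3R := congrArg (fun r : ℚ => (r : ℝ)) e3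
  push_cast at e1R e2R e3R
  have key : ((g 2 : ℚ) : ℝ) = (g 0 : ℝ) * √3 + (g 1 : ℝ) * √5 + (g 3 : ℝ) * √2 := by
    linear_combination (-(g 0 : ℝ)) * hα + (-(g 1 : ℝ)) * hβ + (-(g 2 : ℝ)) * hγ +
      (-(g 3 : ℝ)) * hδ + x * e1R + y * e2R + z * e3R
  obtain ⟨hp, hq, hs, hu⟩ := aux_sqrt_indep key
  fin_cases i <;> simp_all

theorem stmt6 :
    -- (1) for every `t`, the flowed lattice contains the nonzero vector
    -- `(e^{-t}, 0, 0, 0)`, of norm `e^{-t}` …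
    (∀ t : ℝ, ∃ w ∈ LatticeG, w ≠ 0 ∧
        geodFlow4 t w = WithLp.toLp 2 ![Real.exp (-t), 0, 0, 0] ∧
        ‖geodFlow4 t w‖ = Real.exp (-t)) ∧
    -- … so the minimal norm of a nonzero vector of `Λ(g)·a_t` tends to `0`
    (∀ ε > 0, ∃ T : ℝ, ∀ t ≥ T, ∃ w ∈ LatticeG, w ≠ 0 ∧ ‖geodFlow4 t w‖ < ε) ∧
    -- (2) `(0,0,1,0)` lies in the real span of `Λ(g)` …
    ((WithLp.toLp 2 ![0, 0, 1, 0] : EuclideanSpace ℝ (Fin 4)) ∈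
        Submodule.span ℝ (LatticeG : Set (EuclideanSpace ℝ (Fin 4)))) ∧
    -- … and is not contained in the real span of any sublattice of rank ≤ 3
    (∀ v₁ v₂ v₃ : EuclideanSpace ℝ (Fin 4), v₁ ∈ LatticeG → v₂ ∈ LatticeG →
      v₃ ∈ LatticeG →
        (WithLp.toLp 2 ![0, 0, 1, 0] : EuclideanSpace ℝ (Fin 4)) ∉
          Submodule.span ℝ ({v₁, v₂, v₃} : Set (EuclideanSpace ℝ (Fin 4)))) := by
  refine ⟨?_, ?_, ?_, aux_part2b⟩
  · intro t
    exact ⟨WithLp.toLp 2 ![1,0,0,0], aux_g1_mem, aux_g1_ne, aux_flow_g1 t, aux_norm_flow_g1 t⟩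
  · intro ε hε
    refine ⟨1 - Real.log ε, fun t ht => ⟨WithLp.toLp 2 ![1,0,0,0], aux_g1_mem, aux_g1_ne, ?_⟩⟩
    rw [aux_norm_flow_g1]
    calc Real.exp (-t) ≤ Real.exp (Real.log ε - 1) := by
          apply Real.exp_le_exp.mpr; linarith
      _ = ε * Real.exp (-1) := by rw [sub_eq_add_neg, Real.exp_add, Real.exp_log hε]
      _ < ε * 1 := by
          apply mul_lt_mul_of_pos_left _ hε
          exact Real.exp_lt_one_iff.mpr (by norm_num)
      _ = ε := mul_one ε
  · have hg1 : (WithLp.toLp 2 ![1,0,0,0] : EuclideanSpace ℝ (Fin 4)) ∈ LatticeG := aux_g1_mem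
    have hg2 : (WithLp.toLp 2 ![0,1,0,0] : EuclideanSpace ℝ (Fin 4)) ∈ LatticeG :=
      Submodule.subset_span (by simp)
    have hg3 : (WithLp.toLp 2 ![Real.sqrt 3, Real.sqrt 5, 1, Real.sqrt 2] : EuclideanSpace ℝ (Fin 4)) ∈
        LatticeG := Submodule.subset_span (by simp)
    have hg4 : (WithLp.toLp 2 ![0,0,0,1] : EuclideanSpace ℝ (Fin 4)) ∈ LatticeG :=
      Submodule.subset_span (by simp)
    have key : (WithLp.toLp 2 ![0, 0, 1, 0] : EuclideanSpace ℝ (Fin 4)) =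
        WithLp.toLp 2 ![Real.sqrt 3, Real.sqrt 5, 1, Real.sqrt 2]
        + (-Real.sqrt 3) • (WithLp.toLp 2 ![1,0,0,0] : EuclideanSpace ℝ (Fin 4))
        + (-Real.sqrt 5) • (WithLp.toLp 2 ![0,1,0,0] : EuclideanSpace ℝ (Fin 4))
        + (-Real.sqrt 2) • (WithLp.toLp 2 ![0,0,0,1] : EuclideanSpace ℝ (Fin 4)) := by
      ext i
      fin_cases i <;> simp [PiLp.add_apply, PiLp.smul_apply]
    rw [key]
    exact Submodule.add_mem _
      (Submodule.add_mem _
        (Submodule.add_mem _ (Submodule.subset_span hg3)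
          (Submodule.smul_mem _ _ (Submodule.subset_span hg1)))
        (Submodule.smul_mem _ _ (Submodule.subset_span hg2)))
      (Submodule.smul_mem _ _ (Submodule.subset_span hg4))
end
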